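/- arXiv:2207.09090 — 2 statements merged into one kernel-verified Lean document; each statement's English description precedes it below -/
import Mathlib

section
/- In the bandit-over-bandits case, the value function V^{π_θ} = (1/(1−γ))·π_θᵀ𝔯 is β-smooth in θ ∈ ℝ^M with β = 5/(2(1−γ)): for all θ and unit vectors y, |yᵀ (∂²V^{π_θ}/∂θ²) y| ≤ 5/(2(1−γ)). -/
noncomputable def softmax {M : ℕ} (θ : Fin M → ℝ) (m : Fin M) : ℝ :=
  Real.exp (θ m) / ∑ m', Real.exp (θ m')

open Finset

noncomputable def Sf {M : ℕ} (w : Fin M → ℝ) (x : EuclideanSpace ℝ (Fin M)) : ℝ :=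
  ∑ m, w m * Real.exp (x m)

lemma contDiff_Sf {M : ℕ} (w : Fin M → ℝ) {n : ℕ∞} : ContDiff ℝ n (Sf w) := by
  unfold Sf
  exact ContDiff.sum fun m _ =>
    contDiff_const.mul (Real.contDiff_exp.comp ((EuclideanSpace.proj (𝕜 := ℝ) m).contDiff (n := n) :
      ContDiff ℝ n (fun x : EuclideanSpace ℝ (Fin M) => x m)))

lemma hasFDerivAt_Sf {M : ℕ} (w : Fin M → ℝ) (x : EuclideanSpace ℝ (Fin M)) :
    HasFDerivAt (Sf w)
      (∑ m, (w m * Real.exp (x m)) •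
        (EuclideanSpace.proj m : EuclideanSpace ℝ (Fin M) →L[ℝ] ℝ)) x := by
  have h : ∀ m : Fin M,
      HasFDerivAt (fun x : EuclideanSpace ℝ (Fin M) => w m * Real.exp (x m))
        ((w m * Real.exp (x m)) •
          (EuclideanSpace.proj m : EuclideanSpace ℝ (Fin M) →L[ℝ] ℝ)) x := by
    intro m
    have h1 := ((EuclideanSpace.proj (𝕜 := ℝ) m).hasFDerivAt (x := x)).exp.const_mul (w m)
    simpa [smul_smul, PiLp.proj_apply, mul_comm] using h1
  exact HasFDerivAt.fun_sum fun m _ => h m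

lemma Sf_dir {M : ℕ} (w : Fin M → ℝ) (x y : EuclideanSpace ℝ (Fin M)) :
    (∑ m, (w m * Real.exp (x m)) •
        (EuclideanSpace.proj m : EuclideanSpace ℝ (Fin M) →L[ℝ] ℝ)) y
      = Sf (fun m => w m * y m) x := by
  simp only [ContinuousLinearMap.coe_sum', Finset.sum_apply, ContinuousLinearMap.coe_smul',
    Pi.smul_apply, PiLp.proj_apply, smul_eq_mul, Sf]
  exact Finset.sum_congr rfl fun m _ => by ring

lemma hasFDerivAt_inv_comp {M : ℕ} {f : EuclideanSpace ℝ (Fin M) → ℝ}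
    {f' : EuclideanSpace ℝ (Fin M) →L[ℝ] ℝ} {x : EuclideanSpace ℝ (Fin M)}
    (hf : HasFDerivAt f f' x) (h : f x ≠ 0) :
    HasFDerivAt (fun x => (f x)⁻¹) ((-(f x ^ 2)⁻¹) • f') x := by
  have h2 := (hasFDerivAt_inv h).comp x hf
  exact h2.congr_fderiv (by ext z; simp [mul_comm])

lemma abs_bound {M : ℕ} (π r y : Fin M → ℝ) (hπ0 : ∀ m, 0 ≤ π m)
    (hπ1 : ∑ m, π m = 1) (hr0 : ∀ m, 0 ≤ r m) (hr1 : ∀ m, r m ≤ 1)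
    (hy : ∑ m, y m ^ 2 = 1) :
    |(∑ m, π m * (r m * (y m * y m)) - (∑ m, π m * r m) * (∑ m, π m * (y m * y m)))
      - 2 * (∑ m, π m * y m) *
        ((∑ m, π m * (r m * y m)) - (∑ m, π m * r m) * (∑ m, π m * y m))| ≤ 5 / 2 := by
  set p := ∑ m, π m * r m with hp
  have hp0 : 0 ≤ p := Finset.sum_nonneg fun m _ => mul_nonneg (hπ0 m) (hr0 m)
  have hp1 : p ≤ 1 := by
    have : p ≤ ∑ m, π m := Finset.sum_le_sum fun m _ => by nlinarith [hπ0 m, hr1 m]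
    linarith [hπ1 ▸ this]
  have hπle : ∀ m, π m ≤ 1 := by
    intro m
    have := Finset.single_le_sum (f := π) (fun k _ => hπ0 k) (Finset.mem_univ m)
    linarith [hπ1 ▸ this]
  have hy2 : ∀ m, y m ^ 2 ≤ 1 := by
    intro m
    have h := Finset.single_le_sum (f := fun k => y k ^ 2) (fun k _ => sq_nonneg (y k))
      (Finset.mem_univ m)
    rw [hy] at h
    exact h
  have hyabs : ∀ m, |y m| ≤ 1 := by
    intro m
    nlinarith [hy2 m, abs_nonneg (y m), sq_abs (y m)]
  have hfine : ∀ m, π m * |r m - p| ≤ 1 / 4 := by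
    intro m
    have h1 : π m * r m ≤ p := Finset.single_le_sum
      (f := fun k => π k * r k) (fun k _ => mul_nonneg (hπ0 k) (hr0 k)) (Finset.mem_univ m)
    have h2 : p ≤ 1 - π m + π m * r m := by
      have e1 : π m * r m + ∑ k ∈ Finset.univ.erase m, π k * r k = ∑ k, π k * r k :=
        Finset.add_sum_erase _ (fun k => π k * r k) (Finset.mem_univ m)
      have e2 : π m + ∑ k ∈ Finset.univ.erase m, π k = 1 := by
        rw [← hπ1]; exact Finset.add_sum_erase _ π (Finset.mem_univ m)
      rw [← hp] at e1
      have h3 : ∑ k ∈ Finset.univ.erase m, π k * r k ≤ ∑ k ∈ Finset.univ.erase m, π k :=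
        Finset.sum_le_sum fun k _ => by nlinarith [hπ0 k, hr1 k]
      linarith
    have habs : |r m - p| ≤ 1 - π m := by
      rw [abs_le]
      constructor <;> nlinarith [hr0 m, hr1 m, hπ0 m, hπle m]
    calc π m * |r m - p| ≤ π m * (1 - π m) := mul_le_mul_of_nonneg_left habs (hπ0 m)
      _ ≤ 1 / 4 := by nlinarith [sq_nonneg (π m - 1 / 2)]
  have hrp : ∀ m, |r m - p| ≤ 1 := by
    intro m; rw [abs_le]; constructor <;> linarith [hr0 m, hr1 m]
  have eT1 : (∑ m, π m * (r m * (y m * y m))) - p * (∑ m, π m * (y m * y m))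
      = ∑ m, (π m * (r m - p)) * (y m * y m) := by
    rw [Finset.mul_sum, ← Finset.sum_sub_distrib]
    exact Finset.sum_congr rfl fun m _ => by ring
  have eT2 : (∑ m, π m * (r m * y m)) - p * (∑ m, π m * y m)
      = ∑ m, (π m * (r m - p)) * y m := by
    rw [Finset.mul_sum, ← Finset.sum_sub_distrib]
    exact Finset.sum_congr rfl fun m _ => by ring
  have hπabs : ∀ m, |π m * (r m - p)| ≤ 1 / 4 := by
    intro m; rw [abs_mul, abs_of_nonneg (hπ0 m)]; exact hfine m
  have hT1 : |∑ m, (π m * (r m - p)) * (y m * y m)| ≤ 1 / 4 := by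
    calc |∑ m, (π m * (r m - p)) * (y m * y m)|
        ≤ ∑ m, |(π m * (r m - p)) * (y m * y m)| := Finset.abs_sum_le_sum_abs _ _
      _ ≤ ∑ m, (1 / 4) * y m ^ 2 := by
          refine Finset.sum_le_sum fun m _ => ?_
          rw [abs_mul, abs_mul_self]
          have := hπabs m
          nlinarith [sq_nonneg (y m), abs_nonneg (π m * (r m - p))]
      _ = 1 / 4 := by rw [← Finset.mul_sum, hy, mul_one]
  have hA : |∑ m, π m * y m| ≤ 1 := by
    calc |∑ m, π m * y m| ≤ ∑ m, |π m * y m| := Finset.abs_sum_le_sum_abs _ _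
      _ ≤ ∑ m, π m := Finset.sum_le_sum fun m _ => by
          rw [abs_mul, abs_of_nonneg (hπ0 m)]
          nlinarith [hyabs m, hπ0 m, abs_nonneg (y m)]
      _ = 1 := hπ1
  have hB : |∑ m, (π m * (r m - p)) * y m| ≤ 1 := by
    calc |∑ m, (π m * (r m - p)) * y m| ≤ ∑ m, |(π m * (r m - p)) * y m| :=
        Finset.abs_sum_le_sum_abs _ _
      _ ≤ ∑ m, π m := Finset.sum_le_sum fun m _ => by
          rw [abs_mul, abs_mul, abs_of_nonneg (hπ0 m)]
          have h1 : |r m - p| * |y m| ≤ 1 := by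
            nlinarith [hrp m, hyabs m, abs_nonneg (y m), abs_nonneg (r m - p)]
          calc π m * |r m - p| * |y m| = π m * (|r m - p| * |y m|) := by ring
            _ ≤ π m * 1 := mul_le_mul_of_nonneg_left h1 (hπ0 m)
            _ = π m := mul_one _
      _ = 1 := hπ1
  rw [eT1, eT2]
  have habs2 : |2 * (∑ m, π m * y m) * (∑ m, (π m * (r m - p)) * y m)| ≤ 2 := by
    rw [abs_mul, abs_mul, abs_two]
    nlinarith [hA, hB, abs_nonneg (∑ m, π m * y m),
      abs_nonneg (∑ m, (π m * (r m - p)) * y m)]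
  calc |(∑ m, (π m * (r m - p)) * (y m * y m)) -
        2 * (∑ m, π m * y m) * (∑ m, (π m * (r m - p)) * y m)|
      ≤ |∑ m, (π m * (r m - p)) * (y m * y m)| +
        |2 * (∑ m, π m * y m) * (∑ m, (π m * (r m - p)) * y m)| := abs_sub _ _
    _ ≤ 5 / 2 := by linarith [hT1, habs2]


theorem stmt_11 {M : ℕ} (r : Fin M → ℝ) (hr : ∀ m, r m ∈ Set.Icc (0 : ℝ) 1)
    (γ : ℝ) (hγ : γ ∈ Set.Ioo (0 : ℝ) 1)
    (V : EuclideanSpace ℝ (Fin M) → ℝ)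
    (hV : ∀ θ : EuclideanSpace ℝ (Fin M),
      V θ = (1 / (1 - γ)) * ∑ m, softmax (WithLp.equiv 2 (Fin M → ℝ) θ) m * r m) :
    ∀ (θ y : EuclideanSpace ℝ (Fin M)), ‖y‖ = 1 →
      |iteratedFDeriv ℝ 2 V θ ![y, y]| ≤ 5 / (2 * (1 - γ)) := by
  intro θ y hy
  have h1γ : (0:ℝ) < 1 - γ := by linarith [hγ.2]
  have hrhs : (0:ℝ) ≤ 5 / (2 * (1 - γ)) := by positivity
  rcases Nat.eq_zero_or_pos M with hM | hM
  · -- degenerate case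
    subst hM
    have hV0 : V = fun _ => 0 := funext fun x => by
      rw [hV x]; simp
    rw [hV0, iteratedFDeriv_zero_fun]
    simpa using hrhs
  · haveI : Nonempty (Fin M) := ⟨⟨0, hM⟩⟩
    set c : ℝ := 1 / (1 - γ) with hc
    have hcpos : 0 < c := by positivity
    set one : Fin M → ℝ := fun _ => 1 with hone
    have hZ : ∀ x : EuclideanSpace ℝ (Fin M), 0 < Sf one x := by
      intro x
      exact Finset.sum_pos (fun m _ => by simp [hone]; positivity) Finset.univ_nonempty
    have hVeq : V = fun x => c * (Sf r x * (Sf one x)⁻¹) := by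
      funext x
      rw [hV x]
      congr 1
      unfold Sf
      rw [Finset.sum_mul]
      refine Finset.sum_congr rfl fun m _ => ?_
      simp only [softmax, hone, one_mul, WithLp.equiv_apply, div_eq_mul_inv]
      ring
    have hVc : ContDiff ℝ 2 V := by
      rw [hVeq]
      exact contDiff_const.mul ((contDiff_Sf r).mul ((contDiff_Sf one).inv fun x => (hZ x).ne'))
    set φ : EuclideanSpace ℝ (Fin M) → ℝ := fun x =>
      c * ((Sf (fun m => r m * y m) x * Sf one x - Sf r x * Sf (fun m => y m) x) *
        (Sf one x * Sf one x)⁻¹) with hφ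
    have hfd : ∀ x, fderiv ℝ V x y = φ x := by
      intro x
      have h := (((hasFDerivAt_Sf r x).fun_mul
        (hasFDerivAt_inv_comp (hasFDerivAt_Sf one x) (hZ x).ne')).const_mul c)
      have h2 := h.fderiv
      rw [hVeq, h2]
      simp only [ContinuousLinearMap.coe_smul', Pi.smul_apply, ContinuousLinearMap.add_apply,
        ContinuousLinearMap.smul_apply, Sf_dir, smul_eq_mul, hφ]
      simp only [hone, one_mul]
      have hz := (hZ x).ne'
      field_simp
      ring
    have hdiff : DifferentiableAt ℝ (fderiv ℝ V) θ :=
      ((hVc.fderiv_right (m := 1) (by norm_num)).differentiable (by norm_num)).differentiableAt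
    have e0 : iteratedFDeriv ℝ 2 V θ ![y, y] = fderiv ℝ (fderiv ℝ V) θ y y := by
      rw [iteratedFDeriv_two_apply]
      simp
    have e1 : fderiv ℝ (fun x => fderiv ℝ V x y) θ y = fderiv ℝ (fderiv ℝ V) θ y y := by
      rw [fderiv_clm_apply hdiff (differentiableAt_const y)]
      simp
    have e2 : (fun x => fderiv ℝ V x y) = φ := funext hfd
    -- second derivative of φ
    have hInner := ((hasFDerivAt_Sf (fun m => r m * y m) θ).fun_mul (hasFDerivAt_Sf one θ)).fun_sub
      ((hasFDerivAt_Sf r θ).fun_mul (hasFDerivAt_Sf (fun m => y m) θ))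
    have hDen := hasFDerivAt_inv_comp ((hasFDerivAt_Sf one θ).fun_mul (hasFDerivAt_Sf one θ))
      (ne_of_gt (mul_pos (hZ θ) (hZ θ)))
    have hφθ := (hInner.fun_mul hDen).const_mul c
    have e3 := hφθ.fderiv
    have goalEq : iteratedFDeriv ℝ 2 V θ ![y, y] = fderiv ℝ φ θ y := by
      rw [e0, ← e1, e2]
    rw [goalEq, hφ] at *
    rw [e3]
    simp only [ContinuousLinearMap.coe_smul', Pi.smul_apply, ContinuousLinearMap.add_apply,
      ContinuousLinearMap.smul_apply, ContinuousLinearMap.coe_sub', Pi.sub_apply,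
      ContinuousLinearMap.sub_apply, Sf_dir, smul_eq_mul]
    simp only [hone, one_mul]
    -- now pure algebra and the bound
    have hz := hZ θ
    have hzne : Sf one θ ≠ 0 := hz.ne'
    have hSone : Sf one θ = ∑ m, Real.exp (θ m) := by
      unfold Sf; simp [hone]
    have hπ0 : ∀ m : Fin M, 0 ≤ Real.exp (θ m) / Sf one θ := fun m => by positivity
    have hπ1 : ∑ m, Real.exp (θ m) / Sf one θ = 1 := by
      rw [← Finset.sum_div, ← hSone, div_self hzne]
    have hysum : ∑ m, y m ^ 2 = 1 := by
      have h := hy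
      rw [EuclideanSpace.norm_eq] at h
      have h2 : ∑ i, ‖y i‖ ^ 2 = 1 := by
        have := Real.sqrt_eq_one.mp h
        simpa using this
      simpa [Real.norm_eq_abs, sq_abs] using h2
    have key := abs_bound (fun m => Real.exp (θ m) / Sf one θ) r (fun m => y m)
      hπ0 hπ1 (fun m => (hr m).1) (fun m => (hr m).2) hysum
    have hπw : ∀ w : Fin M → ℝ, ∑ m, Real.exp (θ m) / Sf one θ * w m = Sf w θ / Sf one θ := by
      intro w
      rw [show Sf w θ = ∑ m, w m * Real.exp (θ m) from rfl, Finset.sum_div]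
      exact Finset.sum_congr rfl fun m _ => by ring
    have c1 : Sf (fun m => r m * (y m * y m)) θ = Sf (fun m => r m * y m * y m) θ := by
      unfold Sf; exact Finset.sum_congr rfl fun m _ => by ring
    have hone' : Sf (fun _ : Fin M => (1:ℝ)) θ = Sf one θ := by rw [hone]
    have hEq : c *
        ((Sf (fun m => r m * y m) θ * Sf (fun _ : Fin M => (1:ℝ)) θ - Sf r θ * Sf (fun m => y m) θ) *
            (-((Sf (fun _ : Fin M => (1:ℝ)) θ * Sf (fun _ : Fin M => (1:ℝ)) θ) ^ 2)⁻¹ *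
              (Sf (fun _ : Fin M => (1:ℝ)) θ * Sf (fun m => y m) θ +
               Sf (fun _ : Fin M => (1:ℝ)) θ * Sf (fun m => y m) θ)) +
          (Sf (fun _ : Fin M => (1:ℝ)) θ * Sf (fun _ : Fin M => (1:ℝ)) θ)⁻¹ *
            (Sf (fun m => r m * y m) θ * Sf (fun m => y m) θ +
             Sf (fun _ : Fin M => (1:ℝ)) θ * Sf (fun m => r m * y m * y m) θ -
              (Sf r θ * Sf (fun m => y m * y m) θ + Sf (fun m => y m) θ * Sf (fun m => r m * y m) θ)))
        = c * ((∑ m, Real.exp (θ m) / Sf one θ * (r m * (y m * y m)) -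
            (∑ m, Real.exp (θ m) / Sf one θ * r m) * (∑ m, Real.exp (θ m) / Sf one θ * (y m * y m)))
          - 2 * (∑ m, Real.exp (θ m) / Sf one θ * y m) *
            ((∑ m, Real.exp (θ m) / Sf one θ * (r m * y m)) -
             (∑ m, Real.exp (θ m) / Sf one θ * r m) * (∑ m, Real.exp (θ m) / Sf one θ * y m))) := by
      rw [hπw (fun m => r m * (y m * y m)), hπw r, hπw (fun m => y m * y m),
        hπw (fun m => y m), hπw (fun m => r m * y m), c1, hone']
      have hR : Sf r θ = Sf r θ := rfl
      field_simp
      ring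
    rw [hEq, abs_mul, abs_of_pos hcpos]
    calc c * |_| ≤ c * (5 / 2) := mul_le_mul_of_nonneg_left key hcpos.le
      _ = 5 / (2 * (1 - γ)) := by rw [hc]; field_simp
end

section
/- Let P be a row-stochastic S×S matrix depending on α via P(α)_{s,s'} = ∑_a π_{θ_α}(a|s)·P(s'|s,a), where π_{θ_α}(a|s) = ∑_{m=1}^M softmax(θ+αu)(m)·K_m(s,a) for fixed stochastic matrices K_m and a unit vector u ∈ ℝ^M. Then for any x ∈ ℝ^S, ‖(d/dα P(α))|_{α=0} · x‖_∞ ≤ 2·‖u‖₂·‖x‖_∞. -/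
lemma softmax_nonneg {M : ℕ} (θ : Fin M → ℝ) (m : Fin M) : 0 ≤ softmax θ m := by
  unfold softmax
  positivity

lemma denom_pos {M : ℕ} (hM : 0 < M) (θ : Fin M → ℝ) : 0 < ∑ m', Real.exp (θ m') := by
  have : Nonempty (Fin M) := ⟨⟨0, hM⟩⟩
  exact Finset.sum_pos (fun i _ => Real.exp_pos _) Finset.univ_nonempty

lemma softmax_sum {M : ℕ} (hM : 0 < M) (θ : Fin M → ℝ) : ∑ m, softmax θ m = 1 := by
  unfold softmax
  rw [← Finset.sum_div, div_self (denom_pos hM θ).ne']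

lemma softmax_hasDerivAt {M : ℕ} (hM : 0 < M) (θ u : Fin M → ℝ) (m : Fin M) :
    HasDerivAt (fun α : ℝ => softmax (θ + α • u) m)
      (softmax θ m * (u m - ∑ m', softmax θ m' * u m')) 0 := by
  have hD := denom_pos hM θ
  have hnum : ∀ k : Fin M, HasDerivAt (fun α : ℝ => Real.exp (θ k + α * u k))
      (Real.exp (θ k) * u k) 0 := by
    intro k
    have h1 : HasDerivAt (fun α : ℝ => θ k + α * u k) (u k) 0 := by
      simpa using ((hasDerivAt_id (0:ℝ)).mul_const (u k)).const_add (θ k)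
    simpa using h1.exp
  have hden : HasDerivAt (fun α : ℝ => ∑ m', Real.exp (θ m' + α * u m'))
      (∑ m', Real.exp (θ m') * u m') 0 := by
    exact HasDerivAt.fun_sum (fun k _ => hnum k)
  have hden0 : (∑ m', Real.exp (θ m' + (0:ℝ) * u m')) ≠ 0 := by
    simpa using hD.ne'
  have h := (hnum m).fun_div hden hden0
  have heq : (fun α : ℝ => softmax (θ + α • u) m)
      = fun α : ℝ => Real.exp (θ m + α * u m) / ∑ m', Real.exp (θ m' + α * u m') := by
    funext α; simp [softmax, Pi.add_apply, Pi.smul_apply, smul_eq_mul, mul_comm]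
  rw [heq]
  refine h.congr_deriv ?_
  symm
  simp only [zero_mul, add_zero]
  have hT : ∑ m', softmax θ m' * u m' = (∑ m', Real.exp (θ m') * u m') / (∑ m', Real.exp (θ m')) := by
    rw [Finset.sum_div]
    exact Finset.sum_congr rfl fun k _ => by rw [softmax, div_mul_eq_mul_div]
  rw [hT, softmax]
  field_simp

theorem stmt_19 {S A M : ℕ}
    (K : Fin M → Fin S → Fin A → ℝ)
    (hK : ∀ m s, (∀ a, 0 ≤ K m s a) ∧ ∑ a, K m s a = 1)
    (Pker : Fin S → Fin A → Fin S → ℝ)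
    (hPker : ∀ s a, (∀ s', 0 ≤ Pker s a s') ∧ ∑ s', Pker s a s' = 1)
    (θ u : Fin M → ℝ) (hu : Real.sqrt (∑ m, u m ^ 2) = 1)
    (x : Fin S → ℝ) :
    ‖deriv (fun α : ℝ => (fun s : Fin S =>
        ∑ s', (∑ a, (∑ m, softmax (θ + α • u) m * K m s a) * Pker s a s') * x s')) 0‖ ≤
      2 * Real.sqrt (∑ m, u m ^ 2) * ‖x‖ := by
  rcases Nat.eq_zero_or_pos M with hM | hM
  · subst hM; simp at hu
  set B := Real.sqrt (∑ m, u m ^ 2) with hB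
  set d : Fin M → ℝ := fun m => softmax θ m * (u m - ∑ m', softmax θ m' * u m') with hd
  have hderiv : HasDerivAt (fun α : ℝ => (fun s : Fin S =>
      ∑ s', (∑ a, (∑ m, softmax (θ + α • u) m * K m s a) * Pker s a s') * x s'))
      (fun s => ∑ s', (∑ a, (∑ m, d m * K m s a) * Pker s a s') * x s') 0 := by
    apply hasDerivAt_pi.mpr
    intro s
    apply HasDerivAt.fun_sum; intro s' _
    apply HasDerivAt.mul_const
    apply HasDerivAt.fun_sum; intro a _
    apply HasDerivAt.mul_const
    apply HasDerivAt.fun_sum; intro m _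
    exact (softmax_hasDerivAt hM θ u m).mul_const _
  rw [hderiv.deriv]
  have hBnn : 0 ≤ B := Real.sqrt_nonneg _
  have hxnn : (0:ℝ) ≤ ‖x‖ := norm_nonneg _
  -- bounds
  have hBm : ∀ m, |u m| ≤ B := by
    intro m
    rw [← Real.sqrt_sq_eq_abs]
    exact Real.sqrt_le_sqrt (Finset.single_le_sum (fun i _ => sq_nonneg (u i)) (Finset.mem_univ m))
  have hbar : |∑ m', softmax θ m' * u m'| ≤ B := by
    calc |∑ m', softmax θ m' * u m'| ≤ ∑ m', |softmax θ m' * u m'| :=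
          Finset.abs_sum_le_sum_abs _ _
      _ ≤ ∑ m', softmax θ m' * B := by
          refine Finset.sum_le_sum fun m' _ => ?_
          rw [abs_mul, abs_of_nonneg (softmax_nonneg θ m')]
          exact mul_le_mul_of_nonneg_left (hBm m') (softmax_nonneg θ m')
      _ = B := by rw [← Finset.sum_mul, softmax_sum hM, one_mul]
  have hdsum : ∑ m, |d m| ≤ 2 * B := by
    calc ∑ m, |d m| ≤ ∑ m, softmax θ m * (2 * B) := by
          refine Finset.sum_le_sum fun m _ => ?_
          rw [hd, abs_mul, abs_of_nonneg (softmax_nonneg θ m)]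
          refine mul_le_mul_of_nonneg_left ?_ (softmax_nonneg θ m)
          calc |u m - ∑ m', softmax θ m' * u m'| ≤ |u m| + |∑ m', softmax θ m' * u m'| :=
                abs_sub _ _
            _ ≤ B + B := add_le_add (hBm m) hbar
            _ = 2 * B := by ring
      _ = 2 * B := by rw [← Finset.sum_mul, softmax_sum hM, one_mul]
  have hx : ∀ s', |x s'| ≤ ‖x‖ := by
    intro s'
    simpa [Real.norm_eq_abs] using norm_le_pi_norm x s'
  rw [show ‖x‖ = ‖x‖ from rfl]
  refine (pi_norm_le_iff_of_nonneg (by positivity)).mpr fun s => ?_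
  rw [Real.norm_eq_abs]
  -- rearrange
  have hre : (∑ s', (∑ a, (∑ m, d m * K m s a) * Pker s a s') * x s')
      = ∑ m, d m * ∑ a, K m s a * (∑ s', Pker s a s' * x s') := by
    have h1 : (∑ s', (∑ a, (∑ m, d m * K m s a) * Pker s a s') * x s')
        = ∑ s', ∑ a, ∑ m, d m * (K m s a * (Pker s a s' * x s')) := by
      refine Finset.sum_congr rfl fun s' _ => ?_
      rw [Finset.sum_mul]
      refine Finset.sum_congr rfl fun a _ => ?_
      rw [Finset.sum_mul, Finset.sum_mul]
      exact Finset.sum_congr rfl fun m _ => by ring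
    rw [h1, Finset.sum_comm]
    calc ∑ a, ∑ s', ∑ m, d m * (K m s a * (Pker s a s' * x s'))
        = ∑ a, ∑ m, ∑ s', d m * (K m s a * (Pker s a s' * x s')) :=
          Finset.sum_congr rfl fun a _ => Finset.sum_comm
      _ = ∑ m, ∑ a, ∑ s', d m * (K m s a * (Pker s a s' * x s')) := Finset.sum_comm
      _ = ∑ m, d m * ∑ a, K m s a * (∑ s', Pker s a s' * x s') := by
          refine Finset.sum_congr rfl fun m _ => ?_
          rw [Finset.mul_sum]
          refine Finset.sum_congr rfl fun a _ => ?_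
          rw [Finset.mul_sum, Finset.mul_sum]
  rw [hre]
  have hw : ∀ m, |∑ a, K m s a * (∑ s', Pker s a s' * x s')| ≤ ‖x‖ := by
    intro m
    have hin : ∀ a, |∑ s', Pker s a s' * x s'| ≤ ‖x‖ := by
      intro a
      calc |∑ s', Pker s a s' * x s'| ≤ ∑ s', |Pker s a s' * x s'| :=
            Finset.abs_sum_le_sum_abs _ _
        _ ≤ ∑ s', Pker s a s' * ‖x‖ := by
            refine Finset.sum_le_sum fun s' _ => ?_
            rw [abs_mul, abs_of_nonneg ((hPker s a).1 s')]
            exact mul_le_mul_of_nonneg_left (hx s') ((hPker s a).1 s')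
        _ = ‖x‖ := by rw [← Finset.sum_mul, (hPker s a).2, one_mul]
    calc |∑ a, K m s a * (∑ s', Pker s a s' * x s')| ≤ ∑ a, |K m s a * (∑ s', Pker s a s' * x s')| :=
          Finset.abs_sum_le_sum_abs _ _
      _ ≤ ∑ a, K m s a * ‖x‖ := by
          refine Finset.sum_le_sum fun a _ => ?_
          rw [abs_mul, abs_of_nonneg ((hK m s).1 a)]
          exact mul_le_mul_of_nonneg_left (hin a) ((hK m s).1 a)
      _ = ‖x‖ := by rw [← Finset.sum_mul, (hK m s).2, one_mul]
  calc |∑ m, d m * ∑ a, K m s a * (∑ s', Pker s a s' * x s')|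
      ≤ ∑ m, |d m * ∑ a, K m s a * (∑ s', Pker s a s' * x s')| :=
        Finset.abs_sum_le_sum_abs _ _
    _ ≤ ∑ m, |d m| * ‖x‖ := by
        refine Finset.sum_le_sum fun m _ => ?_
        rw [abs_mul]
        exact mul_le_mul_of_nonneg_left (hw m) (abs_nonneg _)
    _ = (∑ m, |d m|) * ‖x‖ := by rw [Finset.sum_mul]
    _ ≤ 2 * B * ‖x‖ := mul_le_mul_of_nonneg_right hdsum hxnn
end
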